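/- arXiv:2311.10279 — 2 statements merged into one kernel-verified Lean document; each statement's English description precedes it below -/
import Mathlib

section
/- Fix n ≥ 2, γ ∈ ℝ^p, covariates z_ij ∈ ℝ^p (1 ≤ i < j ≤ n, z_ji = z_ij) and any vector d̃ ∈ ℝ^n, and define F_γ : ℝ^n → ℝ^n by F_{γ,i}(β) = Σ_{j≠i} μ(β_i + β_j + z_ij^⊤γ) − d̃_i. Then the Jacobian matrix F′_γ is Lipschitz continuous on ℝ^n with Lipschitz coefficient n − 1 in the following sense: for all x, y, v ∈ ℝ^n, ‖(F′_γ(x) − F′_γ(y)) v‖_∞ ≤ (n − 1)‖x − y‖_∞ ‖v‖_∞. -/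
open Real Finset

noncomputable section

/-- The logistic function `μ(x) = eˣ/(1+eˣ)`. -/
def mu (x : ℝ) : ℝ := exp x / (1 + exp x)

/-- ℓ∞ norm of a finite vector. -/
def supNorm {k : ℕ} (x : Fin k → ℝ) : ℝ := ⨆ i, |x i|

/-- `F_{γ,i}(β) = ∑_{j≠i} μ(β_i + β_j + z_ij^⊤γ) − d̃_i`. -/
def Fgamma {n p : ℕ} (z : Fin n → Fin n → Fin p → ℝ) (γ : Fin p → ℝ) (dtil : Fin n → ℝ)
    (β : Fin n → ℝ) (i : Fin n) : ℝ :=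
  (∑ j ∈ univ.erase i, mu (β i + β j + ∑ t, z i j t * γ t)) - dtil i

/-- the Jacobian matrix of `F_γ`: `(F′_γ(x))_{ij} = ∂F_{γ,i}/∂β_j` at `x`. -/
def Jac {n p : ℕ} (z : Fin n → Fin n → Fin p → ℝ) (γ : Fin p → ℝ) (dtil : Fin n → ℝ)
    (x : Fin n → ℝ) : Matrix (Fin n) (Fin n) ℝ :=
  Matrix.of fun i j => fderiv ℝ (fun β => Fgamma z γ dtil β i) x (Pi.single j 1)

/-- derivative of the logistic function. -/
def mu' (x : ℝ) : ℝ := exp x / (1 + exp x)^2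

lemma one_add_exp_pos (x : ℝ) : 0 < 1 + exp x := by positivity

lemma hasDerivAt_mu (x : ℝ) : HasDerivAt mu (mu' x) x := by
  have h := (Real.hasDerivAt_exp x).fun_div ((hasDerivAt_const x (1:ℝ)).fun_add (Real.hasDerivAt_exp x))
    (ne_of_gt (one_add_exp_pos x))
  refine h.congr_deriv ?_
  have := (one_add_exp_pos x).ne'
  unfold mu'
  field_simp
  ring

lemma hasDerivAt_mu' (x : ℝ) :
    HasDerivAt mu' (exp x * (1 - exp x) / (1 + exp x)^3) x := by
  have hd : HasDerivAt (fun y => (1 + exp y)^2) (2 * (1 + exp x) * exp x) x := by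
    have := ((hasDerivAt_const x (1:ℝ)).fun_add (Real.hasDerivAt_exp x)).fun_pow 2
    refine this.congr_deriv ?_; ring
  have h := (Real.hasDerivAt_exp x).fun_div hd (by positivity)
  refine h.congr_deriv ?_
  have h1 := (one_add_exp_pos x).ne'
  field_simp
  ring

lemma abs_deriv_mu'_le (x : ℝ) : |exp x * (1 - exp x) / (1 + exp x)^3| ≤ 1/4 := by
  set u := exp x with hu
  have hu0 : 0 < u := exp_pos x
  rw [abs_div, abs_of_pos (by positivity : (0:ℝ) < (1+u)^3), div_le_iff₀ (by positivity)]
  rcases abs_cases (u * (1 - u)) with ⟨h, _⟩ | ⟨h, _⟩ <;> rw [h] <;>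
    nlinarith [sq_nonneg (1 - u), sq_nonneg (1 + u), sq_nonneg u, mul_pos hu0 hu0]

lemma mu'_lipschitz (a b : ℝ) : |mu' a - mu' b| ≤ (1/4) * |a - b| := by
  have hdiff : Differentiable ℝ mu' := fun x => (hasDerivAt_mu' x).differentiableAt
  have hder : ∀ x, ‖deriv mu' x‖ ≤ 1/4 := by
    intro x
    rw [(hasDerivAt_mu' x).deriv]
    exact abs_deriv_mu'_le x
  have := (lipschitzWith_of_nnnorm_deriv_le (C := (1/4 : NNReal)) hdiff (fun x => by
    rw [← NNReal.coe_le_coe]; push_cast; exact hder x)).dist_le_mul a b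
  rw [Real.dist_eq, Real.dist_eq] at this
  calc |mu' a - mu' b| ≤ ((1/4 : NNReal) : ℝ) * |a - b| := this
    _ = (1/4) * |a - b| := by push_cast; ring

lemma hasFDerivAt_Fgamma {n p : ℕ} (z : Fin n → Fin n → Fin p → ℝ) (γ : Fin p → ℝ)
    (dtil : Fin n → ℝ) (i : Fin n) (x : Fin n → ℝ) :
    HasFDerivAt (fun β => Fgamma z γ dtil β i)
      (∑ j ∈ univ.erase i,
        mu' (x i + x j + ∑ t, z i j t * γ t) •
          ((ContinuousLinearMap.proj (R := ℝ) (φ := fun _ : Fin n => ℝ) i) +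
            (ContinuousLinearMap.proj (R := ℝ) (φ := fun _ : Fin n => ℝ) j))) x := by
  have h : ∀ j ∈ univ.erase i,
      HasFDerivAt (fun β : Fin n → ℝ => mu (β i + β j + ∑ t, z i j t * γ t))
        (mu' (x i + x j + ∑ t, z i j t * γ t) •
          ((ContinuousLinearMap.proj (R := ℝ) (φ := fun _ : Fin n => ℝ) i) +
            (ContinuousLinearMap.proj (R := ℝ) (φ := fun _ : Fin n => ℝ) j))) x := by
    intro j _
    have hinner : HasFDerivAt (fun β : Fin n → ℝ => β i + β j + ∑ t, z i j t * γ t)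
        ((ContinuousLinearMap.proj (R := ℝ) (φ := fun _ : Fin n => ℝ) i) +
          (ContinuousLinearMap.proj (R := ℝ) (φ := fun _ : Fin n => ℝ) j)) x :=
      ((ContinuousLinearMap.proj (R := ℝ) (φ := fun _ : Fin n => ℝ) i) +
        (ContinuousLinearMap.proj (R := ℝ) (φ := fun _ : Fin n => ℝ) j)).hasFDerivAt.add_const _
    exact (hasDerivAt_mu _).comp_hasFDerivAt x hinner
  exact (HasFDerivAt.fun_sum h).sub_const (dtil i)

lemma Jac_apply {n p : ℕ} (z : Fin n → Fin n → Fin p → ℝ) (γ : Fin p → ℝ)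
    (dtil : Fin n → ℝ) (x : Fin n → ℝ) (i l : Fin n) :
    Jac z γ dtil x i l = ∑ j ∈ univ.erase i,
      mu' (x i + x j + ∑ t, z i j t * γ t) *
        ((if i = l then (1:ℝ) else 0) + (if j = l then (1:ℝ) else 0)) := by
  rw [Jac]
  simp only [Matrix.of_apply]
  rw [(hasFDerivAt_Fgamma z γ dtil i x).fderiv]
  simp [ContinuousLinearMap.sum_apply, Pi.single_apply, smul_eq_mul, mul_add, mul_ite,
    mul_one, mul_zero]

lemma sum_ind {n : ℕ} (c : ℝ) (i j : Fin n) (v : Fin n → ℝ) :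
    ∑ l : Fin n, c * ((if i = l then (1:ℝ) else 0) + (if j = l then (1:ℝ) else 0)) * v l
      = c * (v i + v j) := by
  simp [mul_add, add_mul, mul_ite, ite_mul, mul_one, mul_zero, zero_mul, one_mul,
    Finset.sum_add_distrib, Finset.sum_ite_eq]

/-- the Jacobian `F′_γ` is Lipschitz continuous with coefficient `n − 1`. -/
theorem Fgamma_jacobian_lipschitz {n p : ℕ} (hn : 2 ≤ n)
    (z : Fin n → Fin n → Fin p → ℝ) (hzsym : ∀ i j, z i j = z j i)
    (γ : Fin p → ℝ) (dtil : Fin n → ℝ) :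
    ∀ x y v : Fin n → ℝ,
      supNorm ((Jac z γ dtil x - Jac z γ dtil y).mulVec v) ≤
        ((n : ℝ) - 1) * supNorm (x - y) * supNorm v := by
  intro x y v
  have hne : Nonempty (Fin n) := ⟨⟨0, by omega⟩⟩
  have habs : ∀ (u : Fin n → ℝ) (a : Fin n), |u a| ≤ supNorm u := by
    intro u a
    exact le_ciSup (Set.Finite.bddAbove (Set.finite_range fun b => |u b|)) a
  have hΔ : 0 ≤ supNorm (x - y) :=
    le_trans (abs_nonneg _) (habs _ (Classical.arbitrary _))
  have hV : 0 ≤ supNorm v :=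
    le_trans (abs_nonneg _) (habs _ (Classical.arbitrary _))
  set Δ := supNorm (x - y) with hΔdef
  set V := supNorm v with hVdef
  refine ciSup_le fun i => ?_
  have key : ((Jac z γ dtil x - Jac z γ dtil y).mulVec v) i
      = ∑ j ∈ univ.erase i,
          (mu' (x i + x j + ∑ t, z i j t * γ t) - mu' (y i + y j + ∑ t, z i j t * γ t))
            * (v i + v j) := by
    have h1 : ((Jac z γ dtil x - Jac z γ dtil y).mulVec v) i
        = ∑ l, (Jac z γ dtil x i l - Jac z γ dtil y i l) * v l := by
      simp [Matrix.mulVec, dotProduct, Matrix.sub_apply]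
    rw [h1]
    have h2 : ∀ l, (Jac z γ dtil x i l - Jac z γ dtil y i l) * v l
        = ∑ j ∈ univ.erase i,
            (mu' (x i + x j + ∑ t, z i j t * γ t) - mu' (y i + y j + ∑ t, z i j t * γ t))
              * ((if i = l then (1:ℝ) else 0) + (if j = l then (1:ℝ) else 0)) * v l := by
      intro l
      rw [Jac_apply, Jac_apply, ← Finset.sum_sub_distrib, Finset.sum_mul]
      exact Finset.sum_congr rfl fun j _ => by ring
    simp only [h2]
    rw [Finset.sum_comm]
    exact Finset.sum_congr rfl fun j _ => sum_ind _ i j v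
  rw [key]
  have hterm : ∀ j ∈ univ.erase i,
      |(mu' (x i + x j + ∑ t, z i j t * γ t) - mu' (y i + y j + ∑ t, z i j t * γ t))
          * (v i + v j)| ≤ Δ * V := by
    intro j _
    rw [abs_mul]
    have hD : |mu' (x i + x j + ∑ t, z i j t * γ t)
        - mu' (y i + y j + ∑ t, z i j t * γ t)| ≤ Δ / 2 := by
      refine le_trans (mu'_lipschitz _ _) ?_
      have hxy : (x i + x j + ∑ t, z i j t * γ t) - (y i + y j + ∑ t, z i j t * γ t)
          = (x - y) i + (x - y) j := by simp [Pi.sub_apply]; ring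
      rw [hxy]
      have := abs_add_le ((x - y) i) ((x - y) j)
      have hi := habs (x - y) i
      have hj := habs (x - y) j
      linarith
    have hv : |v i + v j| ≤ 2 * V := by
      have := abs_add_le (v i) (v j)
      have hi := habs v i
      have hj := habs v j
      linarith
    calc |mu' _ - mu' _| * |v i + v j| ≤ (Δ / 2) * (2 * V) :=
          mul_le_mul hD hv (abs_nonneg _) (by linarith)
      _ = Δ * V := by ring
  calc |∑ j ∈ univ.erase i, _| ≤ ∑ j ∈ univ.erase i,
        |(mu' (x i + x j + ∑ t, z i j t * γ t) - mu' (y i + y j + ∑ t, z i j t * γ t))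
          * (v i + v j)| := Finset.abs_sum_le_sum_abs _ _
    _ ≤ ∑ _j ∈ univ.erase i, Δ * V := Finset.sum_le_sum hterm
    _ = ((univ.erase i).card : ℝ) * (Δ * V) := by rw [Finset.sum_const, nsmul_eq_mul]
    _ = ((n : ℝ) - 1) * Δ * V := by
        rw [Finset.card_erase_of_mem (mem_univ i), Finset.card_univ, Fintype.card_fin]
        rw [Nat.cast_sub (by omega)]
        push_cast; ring

end
end

section
/- Let n ≥ 3 and 0 < m ≤ M, and let V = (v_ij) be an n×n symmetric matrix with v_ii = Σ_{j≠i} v_ij for every i and m ≤ v_ij ≤ M for all i ≠ j. Then V is invertible, and with S = diag(1/v_11, …, 1/v_nn), the approximation error satisfies ‖V^{−1} − S‖_max ≤ (1/(n−1)²)·( M/(2m²) + n M²/(2(n−2)m³) + (3n−2)/(2nm) ), where ‖A‖_max = max_{i,j} |A_ij|. -/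
open Finset Matrix

noncomputable section


lemma sum_ite_ne {n : ℕ} (i : Fin n) (f : Fin n → ℝ) :
    ∑ j, (if j = i then 0 else f j) = ∑ j ∈ Finset.univ.erase i, f j := by
  have hupd : (fun j => if j = i then (0:ℝ) else f j) = Function.update f i 0 := by
    funext j
    by_cases h : j = i
    · simp [h, Function.update]
    · simp [Function.update, h]
  simp only [hupd]
  rw [Finset.sum_update_of_mem (Finset.mem_univ i), Finset.erase_eq]
  simp

lemma quadform_eq {n : ℕ} (V : Matrix (Fin n) (Fin n) ℝ) (hsym : V.IsSymm)
    (hbal : ∀ i, V i i = ∑ j ∈ Finset.univ.erase i, V i j) (x : Fin n → ℝ) :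
    x ⬝ᵥ (V *ᵥ x) =
      (1/2) * ∑ i, ∑ j, (if i = j then 0 else V i j * (x i + x j)^2) := by
  have hGsym : ∀ i j : Fin n, V j i = V i j := fun i j => by
    simpa using (congrFun (congrFun hsym j) i).symm
  have hG1 : ∀ i, ∑ j, (if i = j then (0:ℝ) else V i j) = V i i := by
    intro i
    rw [hbal i, ← sum_ite_ne i (fun j => V i j)]
    refine Finset.sum_congr rfl fun j _ => ?_
    by_cases h : j = i
    · simp [h]
    · rw [if_neg h, if_neg (fun hh => h hh.symm)]
  have e1 : x ⬝ᵥ (V *ᵥ x) = ∑ i, ∑ j, V i j * x i * x j := by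
    simp only [dotProduct, Matrix.mulVec, Finset.mul_sum]
    exact Finset.sum_congr rfl fun i _ => Finset.sum_congr rfl fun j _ => by ring
  have e2 : ∀ i, ∑ j, V i j * x i * x j
      = (∑ j, (if i = j then (0:ℝ) else V i j) * x i * x j) + V i i * (x i * x i) := by
    intro i
    have h1 : ∑ j, (V i j * x i * x j - (if i = j then (0:ℝ) else V i j) * x i * x j)
        = V i i * (x i * x i) := by
      rw [Finset.sum_eq_single i]
      · simp; ring
      · intro j _ hj; simp [Ne.symm hj]
      · simp
    rw [Finset.sum_sub_distrib] at h1
    linarith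
  have e3 : x ⬝ᵥ (V *ᵥ x) =
      ∑ i, ∑ j, ((if i = j then (0:ℝ) else V i j) * x i * x j
        + (if i = j then (0:ℝ) else V i j) * (x i * x i)) := by
    rw [e1]
    refine Finset.sum_congr rfl fun i _ => ?_
    rw [e2 i, Finset.sum_add_distrib, ← Finset.sum_mul, hG1 i]
  have e4 : ∑ i, ∑ j, (if i = j then (0:ℝ) else V i j) * (x j * x j)
      = ∑ i, ∑ j, (if i = j then (0:ℝ) else V i j) * (x i * x i) := by
    rw [Finset.sum_comm]
    refine Finset.sum_congr rfl fun i _ => Finset.sum_congr rfl fun j _ => ?_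
    by_cases h : i = j
    · simp [h]
    · rw [if_neg (fun hh => h hh.symm), if_neg h, hGsym]
  have e5 : (1/2) * ∑ i, ∑ j, (if i = j then 0 else V i j * (x i + x j)^2)
      = ∑ i, ∑ j, ((1/2) * ((if i = j then (0:ℝ) else V i j) * (x i * x i))
        + ((1/2) * ((if i = j then (0:ℝ) else V i j) * (x j * x j))
        + (if i = j then (0:ℝ) else V i j) * x i * x j)) := by
    rw [Finset.mul_sum]
    refine Finset.sum_congr rfl fun i _ => ?_
    rw [Finset.mul_sum]
    refine Finset.sum_congr rfl fun j _ => ?_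
    by_cases h : i = j
    · simp [h]
    · simp only [if_neg h]; ring
  rw [e3, e5]
  simp only [Finset.sum_add_distrib, ← Finset.mul_sum]
  linarith [e4]

lemma qform_eq {n : ℕ} (x : Fin n → ℝ) :
    (1/2) * ∑ i, ∑ j, (if i = j then (0:ℝ) else (x i + x j)^2)
      = ((n:ℝ)-2) * (x ⬝ᵥ x) + (∑ i, x i)^2 := by
  have inner : ∀ i, ∑ j, (if i = j then (0:ℝ) else (x i + x j)^2)
      = (∑ j, (x i + x j)^2) - (x i + x i)^2 := by
    intro i
    have hupd : (fun j => if i = j then (0:ℝ) else (x i + x j)^2)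
        = Function.update (fun j => (x i + x j)^2) i 0 := by
      funext j
      by_cases h : j = i
      · simp [h, Function.update]
      · rw [if_neg (fun hh => h hh.symm)]
        simp [Function.update, h]
    simp only [hupd]
    rw [Finset.sum_update_of_mem (Finset.mem_univ i), ← Finset.erase_eq,
      Finset.sum_erase_eq_sub (Finset.mem_univ i)]
    ring
  have expand : ∀ i, ∑ j, (x i + x j)^2
      = (n:ℝ) * (x i)^2 + 2 * x i * (∑ j, x j) + (∑ j, (x j)^2) := by
    intro i
    have h : ∀ j, (x i + x j)^2 = (x i)^2 + 2 * x i * x j + (x j)^2 := fun j => by ring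
    simp only [h, Finset.sum_add_distrib, Finset.sum_const, Finset.card_univ,
      Fintype.card_fin, nsmul_eq_mul, ← Finset.mul_sum]
  have hdot : x ⬝ᵥ x = ∑ j, (x j)^2 := by
    simp [dotProduct, sq]
  simp only [inner, expand, Finset.sum_add_distrib, Finset.sum_sub_distrib,
    Finset.sum_const, Finset.card_univ, Fintype.card_fin, nsmul_eq_mul, ← Finset.mul_sum,
    ← Finset.sum_mul, hdot]
  have h2 : ∀ i, (x i + x i)^2 = 4 * (x i)^2 := fun i => by ring
  simp only [h2, ← Finset.mul_sum]
  ring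

private lemma pt1 (D t u v : ℝ) : (v - (u - t)/D) * (v - (u - t)/D)
    = v*v - (2/D)*(u*v) + (2*t/D)*v + (1/D^2)*(u*u) - (2*t/D^2)*u + t*t/D^2 := by
  ring

private lemma pt2 (D t u v : ℝ) : (v - (u - t)/D) = v - (1/D)*u + t/D := by ring

lemma key_id {n : ℕ} (hn : 3 ≤ n) (c : ℝ) (hc : c ≠ 0) (x y : Fin n → ℝ) :
    c * (((n:ℝ)-2) *
        ((fun k => y k - (x k - (∑ l, x l)/(2*((n:ℝ)-1)))/(c*((n:ℝ)-2))) ⬝ᵥ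
         (fun k => y k - (x k - (∑ l, x l)/(2*((n:ℝ)-1)))/(c*((n:ℝ)-2))))
      + (∑ k, (y k - (x k - (∑ l, x l)/(2*((n:ℝ)-1)))/(c*((n:ℝ)-2))))^2)
    = c * (((n:ℝ)-2) * (y ⬝ᵥ y) + (∑ k, y k)^2) - 2*(x ⬝ᵥ y)
      + ((x ⬝ᵥ x) - (∑ k, x k)^2/(2*((n:ℝ)-1)))/(c*((n:ℝ)-2)) := by
  have hn' : (3:ℝ) ≤ (n:ℝ) := by exact_mod_cast hn
  have hν1 : ((n:ℝ) - 1) ≠ 0 := by linarith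
  have hν2 : ((n:ℝ) - 2) ≠ 0 := by linarith
  have h1 : ((fun k => y k - (x k - (∑ l, x l)/(2*((n:ℝ)-1)))/(c*((n:ℝ)-2))) ⬝ᵥ
         (fun k => y k - (x k - (∑ l, x l)/(2*((n:ℝ)-1)))/(c*((n:ℝ)-2))))
      = (∑ k, y k * y k)
        - (2/(c*((n:ℝ)-2)))*(∑ k, x k * y k)
        + (2*((∑ l, x l)/(2*((n:ℝ)-1)))/(c*((n:ℝ)-2)))*(∑ k, y k)
        + (1/(c*((n:ℝ)-2))^2)*(∑ k, x k * x k)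
        - (2*((∑ l, x l)/(2*((n:ℝ)-1)))/(c*((n:ℝ)-2))^2)*(∑ k, x k)
        + (n:ℝ)*(((∑ l, x l)/(2*((n:ℝ)-1)))*((∑ l, x l)/(2*((n:ℝ)-1)))/(c*((n:ℝ)-2))^2) := by
    simp only [dotProduct]
    rw [Finset.sum_congr rfl (fun k _ => pt1 (c*((n:ℝ)-2)) ((∑ l, x l)/(2*((n:ℝ)-1))) (x k) (y k))]
    simp only [Finset.sum_add_distrib, Finset.sum_sub_distrib, ← Finset.mul_sum,
      Finset.sum_const, Finset.card_univ, Fintype.card_fin, nsmul_eq_mul]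
  have h2 : (∑ k, (y k - (x k - (∑ l, x l)/(2*((n:ℝ)-1)))/(c*((n:ℝ)-2))))
      = (∑ k, y k) - (1/(c*((n:ℝ)-2)))*(∑ k, x k)
        + (n:ℝ)*(((∑ l, x l)/(2*((n:ℝ)-1)))/(c*((n:ℝ)-2))) := by
    rw [Finset.sum_congr rfl (fun k _ => pt2 (c*((n:ℝ)-2)) ((∑ l, x l)/(2*((n:ℝ)-1))) (x k) (y k))]
    simp only [Finset.sum_add_distrib, Finset.sum_sub_distrib, ← Finset.mul_sum,
      Finset.sum_const, Finset.card_univ, Fintype.card_fin, nsmul_eq_mul]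
  have hxy : x ⬝ᵥ y = ∑ k, x k * y k := rfl
  have hxx : x ⬝ᵥ x = ∑ k, x k * x k := rfl
  have hyy : y ⬝ᵥ y = ∑ k, y k * y k := rfl
  rw [h1, h2, hxy, hxx, hyy]
  generalize (∑ k, x k * x k) = A
  generalize (∑ k, x k) = B
  generalize (∑ k, y k * y k) = C
  generalize (∑ k, y k) = Dv
  generalize (∑ k, x k * y k) = E
  field_simp
  ring

lemma stepU (ν m M A1 A2 A3 : ℝ) (hν : 3 ≤ ν) (hm : 0 < m) (hmM : m ≤ M)
    (c1 : (ν-1)*m*A1 ≤ M) (c2 : (ν-1)*m*A2 ≤ M) (c3 : (ν-1)*m*A3 ≤ M) :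
    (A1 - 1/(2*(ν-1)))/(m*(ν-2)) + (A2 - 1/(2*(ν-1)))/(m*(ν-2))
      - (A1 - 2*A3 + A2)/(M*(ν-2))
      ≤ (2*M - m)/((ν-1)*(ν-2)*m^2) := by
  have h1 : (0:ℝ) < ν - 1 := by linarith
  have h2 : (0:ℝ) < ν - 2 := by linarith
  have hM : (0:ℝ) < M := lt_of_lt_of_le hm hmM
  have key : (M*(2*(ν-1)*(A1+A2) - 2) - 2*(ν-1)*m*(A1 + A2 - 2*A3)) * m
      ≤ 2*M*(2*M - m) := by
    nlinarith [mul_nonneg (sub_nonneg.mpr hmM) (sub_nonneg.mpr c1),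
      mul_nonneg (sub_nonneg.mpr hmM) (sub_nonneg.mpr c2),
      mul_nonneg hm.le (sub_nonneg.mpr c3)]
  have eL : (A1 - 1/(2*(ν-1)))/(m*(ν-2)) + (A2 - 1/(2*(ν-1)))/(m*(ν-2))
      - (A1 - 2*A3 + A2)/(M*(ν-2))
      = (M*(2*(ν-1)*(A1+A2) - 2) - 2*(ν-1)*m*(A1 + A2 - 2*A3))/(2*(ν-1)*(ν-2)*m*M) := by
    field_simp
    ring
  rw [eL, div_le_div_iff₀ (by positivity) (by positivity)]
  nlinarith [mul_le_mul_of_nonneg_left key (show (0:ℝ) ≤ 2*(ν-1)*(ν-2) by positivity)]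

lemma stepL (ν m M A1 A2 A3 : ℝ) (hν : 3 ≤ ν) (hm : 0 < m) (hmM : m ≤ M)
    (c1 : (ν-1)*m*A1 ≤ M) (c2 : (ν-1)*m*A2 ≤ M) (c3 : 0 ≤ A3) :
    (A1 - 1/(2*(ν-1)))/(m*(ν-2)) + (A2 - 1/(2*(ν-1)))/(m*(ν-2))
      - (A1 + 2*A3 + A2 - 4/(2*(ν-1)))/(M*(ν-2))
      ≤ (2*M - m)/((ν-1)*(ν-2)*m^2) := by
  have h1 : (0:ℝ) < ν - 1 := by linarith
  have h2 : (0:ℝ) < ν - 2 := by linarith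
  have hM : (0:ℝ) < M := lt_of_lt_of_le hm hmM
  have key : (M*(2*(ν-1)*(A1+A2) - 2) - m*(2*(ν-1)*(A1 + 2*A3 + A2) - 4)) * m
      ≤ 2*M*(2*M - m) := by
    nlinarith [mul_nonneg (sub_nonneg.mpr hmM) (sub_nonneg.mpr c1),
      mul_nonneg (sub_nonneg.mpr hmM) (sub_nonneg.mpr c2),
      mul_nonneg (mul_nonneg (mul_nonneg h1.le hm.le) hm.le) c3,
      mul_nonneg hm.le (sub_nonneg.mpr hmM)]
  have eL : (A1 - 1/(2*(ν-1)))/(m*(ν-2)) + (A2 - 1/(2*(ν-1)))/(m*(ν-2))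
      - (A1 + 2*A3 + A2 - 4/(2*(ν-1)))/(M*(ν-2))
      = (M*(2*(ν-1)*(A1+A2) - 2) - m*(2*(ν-1)*(A1 + 2*A3 + A2) - 4))/(2*(ν-1)*(ν-2)*m*M) := by
    field_simp
    ring
  rw [eL, div_le_div_iff₀ (by positivity) (by positivity)]
  nlinarith [mul_le_mul_of_nonneg_left key (show (0:ℝ) ≤ 2*(ν-1)*(ν-2) by positivity)]

lemma finalT (ν m M : ℝ) (hν : 3 ≤ ν) (hm : 0 < m) (hmM : m ≤ M) :
    (2*M - m)/(2*(ν-1)*(ν-2)*m^2) + M/(((ν-1)*m)*((ν-1)*m))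
      ≤ (1/(ν-1)^2) * (M/(2*m^2) + ν*M^2/(2*(ν-2)*m^3) + (3*ν-2)/(2*ν*m)) := by
  have h1 : (0:ℝ) < ν - 1 := by linarith
  have h2 : (0:ℝ) < ν - 2 := by linarith
  have h0 : (0:ℝ) < ν := by linarith
  have hM : (0:ℝ) < M := lt_of_lt_of_le hm hmM
  have key : ν*(ν-1)*m*M*(2*M-m) + 2*ν*(ν-2)*m*M^2
      ≤ ν*(ν-2)*m*M^2 + ν^2*M^3 + (3*ν-2)*(ν-2)*m^2*M := by
    have ha : 0 ≤ M - m := sub_nonneg.mpr hmM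
    have hb : 0 ≤ ν - 3 := by linarith
    nlinarith [mul_nonneg (mul_nonneg (mul_nonneg hm.le hm.le) hm.le) hb,
      mul_nonneg (mul_nonneg ha (mul_nonneg hm.le hm.le)) hb,
      mul_nonneg (mul_nonneg (mul_nonneg ha ha) hm.le) hb,
      mul_nonneg (mul_nonneg (mul_nonneg hm.le hm.le) hm.le) (mul_nonneg hb hb),
      mul_nonneg (mul_nonneg (mul_nonneg ha hm.le) hm.le) (mul_nonneg hb hb),
      mul_nonneg (mul_nonneg (mul_nonneg ha ha) ha) hb,
      mul_nonneg (mul_nonneg (mul_nonneg ha ha) ha) (mul_nonneg hb hb),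
      mul_nonneg (mul_nonneg (mul_nonneg ha ha) hm.le) (mul_nonneg hb hb),
      mul_nonneg (mul_nonneg ha hm.le) hm.le,
      mul_nonneg (mul_nonneg ha ha) hm.le,
      mul_nonneg (mul_nonneg ha ha) ha,
      mul_nonneg (mul_nonneg hm.le hm.le) hm.le]
  have eL : (2*M - m)/(2*(ν-1)*(ν-2)*m^2) + M/(((ν-1)*m)*((ν-1)*m))
      = (ν*(ν-1)*m*M*(2*M-m) + 2*ν*(ν-2)*m*M^2)/(2*ν*(ν-1)^2*(ν-2)*m^3*M) := by
    field_simp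
  have eR : (1/(ν-1)^2) * (M/(2*m^2) + ν*M^2/(2*(ν-2)*m^3) + (3*ν-2)/(2*ν*m))
      = (ν*(ν-2)*m*M^2 + ν^2*M^3 + (3*ν-2)*(ν-2)*m^2*M)/(2*ν*(ν-1)^2*(ν-2)*m^3*M) := by
    field_simp
  rw [eL, eR]
  gcongr

/-- for a diagonally balanced matrix `V ∈ L_n(m, M)`, `V` is invertible
and the diagonal matrix `S = diag(1/v_11, …, 1/v_nn)` approximates `V⁻¹` with the
stated entrywise error bound. -/
theorem diagonally_balanced_inverse_approx
    (n : ℕ) (hn : 3 ≤ n) (m M : ℝ) (hm : 0 < m) (hmM : m ≤ M)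
    (V : Matrix (Fin n) (Fin n) ℝ) (hsym : V.IsSymm)
    (hbal : ∀ i, V i i = ∑ j ∈ univ.erase i, V i j)
    (hlb : ∀ i j, i ≠ j → m ≤ V i j) (hub : ∀ i j, i ≠ j → V i j ≤ M) :
    IsUnit V.det ∧
      ∀ i j, |(V⁻¹ - Matrix.diagonal (fun i => (V i i)⁻¹)) i j| ≤
        (1 / ((n : ℝ) - 1) ^ 2) *
          (M / (2 * m ^ 2) + (n : ℝ) * M ^ 2 / (2 * ((n : ℝ) - 2) * m ^ 3) +
            (3 * (n : ℝ) - 2) / (2 * (n : ℝ) * m)) := by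
  classical
  have hM0 : 0 < M := lt_of_lt_of_le hm hmM
  have hn3 : (3:ℝ) ≤ (n:ℝ) := by exact_mod_cast hn
  have hν1 : (0:ℝ) < (n:ℝ) - 1 := by linarith
  have hν2 : (0:ℝ) < (n:ℝ) - 2 := by linarith
  have hν0 : (0:ℝ) < (n:ℝ) := by linarith
  have hGsym : ∀ i j : Fin n, V j i = V i j := fun i j => by
    simpa using (congrFun (congrFun hsym j) i).symm
  have hcard : ∀ i : Fin n, (((Finset.univ.erase i)).card : ℝ) = (n:ℝ) - 1 := by
    intro i
    rw [Finset.card_erase_of_mem (Finset.mem_univ i), Finset.card_univ, Fintype.card_fin]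
    have h1 : (1:ℕ) ≤ n := by omega
    push_cast [h1]
    ring
  have hd_lb : ∀ i, ((n:ℝ) - 1) * m ≤ V i i := by
    intro i
    have h := Finset.card_nsmul_le_sum (Finset.univ.erase i) (fun j => V i j) m
      (fun j hj => hlb i j (Ne.symm (Finset.ne_of_mem_erase hj)))
    rw [hbal i]
    calc ((n:ℝ)-1)*m = ((Finset.univ.erase i).card : ℝ) * m := by rw [hcard]
    _ = (Finset.univ.erase i).card • m := (nsmul_eq_mul _ _).symm
    _ ≤ ∑ j ∈ Finset.univ.erase i, V i j := h
  have hd_ub : ∀ i, V i i ≤ ((n:ℝ) - 1) * M := by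
    intro i
    have h := Finset.sum_le_card_nsmul (Finset.univ.erase i) (fun j => V i j) M
      (fun j hj => hub i j (Ne.symm (Finset.ne_of_mem_erase hj)))
    rw [hbal i]
    calc ∑ j ∈ Finset.univ.erase i, V i j ≤ (Finset.univ.erase i).card • M := h
    _ = ((Finset.univ.erase i).card : ℝ) * M := nsmul_eq_mul _ _
    _ = ((n:ℝ)-1)*M := by rw [hcard]
  have hd_pos : ∀ i, 0 < V i i := fun i =>
    lt_of_lt_of_le (by positivity) (hd_lb i)
  have hq_nonneg : ∀ x : Fin n → ℝ, 0 ≤ x ⬝ᵥ x := fun x =>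
    Finset.sum_nonneg fun k _ => mul_self_nonneg _
  -- quadratic form sandwich
  have hsand : ∀ x : Fin n → ℝ,
      m * (((n:ℝ)-2) * (x ⬝ᵥ x) + (∑ k, x k)^2) ≤ x ⬝ᵥ (V *ᵥ x)
      ∧ x ⬝ᵥ (V *ᵥ x) ≤ M * (((n:ℝ)-2) * (x ⬝ᵥ x) + (∑ k, x k)^2) := by
    intro x
    have hVf := quadform_eq V hsym hbal x
    have hQf := qform_eq x
    constructor
    · rw [hVf, ← hQf]
      have hsum : ∑ i, ∑ j, m * (if i = j then (0:ℝ) else (x i + x j)^2)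
          ≤ ∑ i, ∑ j, (if i = j then (0:ℝ) else V i j * (x i + x j)^2) := by
        refine Finset.sum_le_sum fun i _ => Finset.sum_le_sum fun j _ => ?_
        by_cases h : i = j
        · simp [h]
        · simp only [if_neg h]
          exact mul_le_mul_of_nonneg_right (hlb i j h) (sq_nonneg _)
      simp only [← Finset.mul_sum] at hsum
      linarith
    · rw [hVf, ← hQf]
      have hsum : ∑ i, ∑ j, (if i = j then (0:ℝ) else V i j * (x i + x j)^2)
          ≤ ∑ i, ∑ j, M * (if i = j then (0:ℝ) else (x i + x j)^2) := by
        refine Finset.sum_le_sum fun i _ => Finset.sum_le_sum fun j _ => ?_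
        by_cases h : i = j
        · simp [h]
        · simp only [if_neg h]
          exact mul_le_mul_of_nonneg_right (hub i j h) (sq_nonneg _)
      simp only [← Finset.mul_sum] at hsum
      linarith
  -- positive definiteness
  have hPD : V.PosDef := by
    rw [Matrix.posDef_iff_dotProduct_mulVec]
    constructor
    · rw [Matrix.IsHermitian]
      ext i j
      simp only [Matrix.conjTranspose_apply, star_trivial]
      exact hGsym i j
    · intro x hx
      have hdot : 0 < x ⬝ᵥ x := by
        obtain ⟨k, hk⟩ : ∃ k, x k ≠ 0 := by
          by_contra hno; push_neg at hno; exact hx (funext fun k => hno k)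
        exact Finset.sum_pos' (fun k _ => mul_self_nonneg _)
          ⟨k, Finset.mem_univ k, mul_self_pos.mpr hk⟩
      have h := (hsand x).1
      have hpos : 0 < m * (((n:ℝ)-2)*(x ⬝ᵥ x) + (∑ k, x k)^2) := by
        have h1 : 0 < ((n:ℝ)-2)*(x ⬝ᵥ x) := mul_pos hν2 hdot
        nlinarith [sq_nonneg (∑ k, x k)]
      have : (0:ℝ) < x ⬝ᵥ (V *ᵥ x) := lt_of_lt_of_le hpos h
      simpa using this
  have hdet : IsUnit V.det := isUnit_iff_ne_zero.mpr (ne_of_gt hPD.det_pos)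
  refine ⟨hdet, ?_⟩
  have hVV : V * V⁻¹ = 1 := Matrix.mul_nonsing_inv V hdet
  have hV'V : V⁻¹ * V = 1 := Matrix.nonsing_inv_mul V hdet
  have hme1 : ∀ z : Fin n → ℝ, V *ᵥ (V⁻¹ *ᵥ z) = z := by
    intro z; rw [Matrix.mulVec_mulVec, hVV, Matrix.one_mulVec]
  have hme2 : ∀ z : Fin n → ℝ, V⁻¹ *ᵥ (V *ᵥ z) = z := by
    intro z; rw [Matrix.mulVec_mulVec, hV'V, Matrix.one_mulVec]
  have hswap : ∀ a b : Fin n → ℝ, a ⬝ᵥ (V *ᵥ b) = (V *ᵥ a) ⬝ᵥ b := by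
    intro a b
    rw [Matrix.dotProduct_mulVec, ← Matrix.vecMul_transpose, hsym]
  have hsymInv : (V⁻¹)ᵀ = V⁻¹ := by
    rw [Matrix.transpose_nonsing_inv, hsym]
  have hswapInv : ∀ a b : Fin n → ℝ, a ⬝ᵥ (V⁻¹ *ᵥ b) = (V⁻¹ *ᵥ a) ⬝ᵥ b := by
    intro a b
    rw [Matrix.dotProduct_mulVec, ← Matrix.vecMul_transpose, hsymInv]
  -- upper bound for the inverse quadratic form
  have hupper : ∀ x : Fin n → ℝ, x ⬝ᵥ (V⁻¹ *ᵥ x)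
      ≤ ((x ⬝ᵥ x) - (∑ k, x k)^2/(2*((n:ℝ)-1)))/(m*((n:ℝ)-2)) := by
    intro x
    set y := V⁻¹ *ᵥ x with hy
    have hVy : V *ᵥ y = x := hme1 x
    have hk := key_id hn m (ne_of_gt hm) x y
    have hz : 0 ≤ m * (((n:ℝ)-2) *
        ((fun k => y k - (x k - (∑ l, x l)/(2*((n:ℝ)-1)))/(m*((n:ℝ)-2))) ⬝ᵥ
         (fun k => y k - (x k - (∑ l, x l)/(2*((n:ℝ)-1)))/(m*((n:ℝ)-2))))
      + (∑ k, (y k - (x k - (∑ l, x l)/(2*((n:ℝ)-1)))/(m*((n:ℝ)-2))))^2) :=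
      mul_nonneg hm.le (add_nonneg (mul_nonneg hν2.le (hq_nonneg _)) (sq_nonneg _))
    have hyq := (hsand y).1
    rw [show y ⬝ᵥ (V *ᵥ y) = x ⬝ᵥ y by rw [hVy, dotProduct_comm]] at hyq
    linarith [hk, hz, hyq]
  -- lower bound for the inverse quadratic form
  have hlower : ∀ x : Fin n → ℝ,
      ((x ⬝ᵥ x) - (∑ k, x k)^2/(2*((n:ℝ)-1)))/(M*((n:ℝ)-2)) ≤ x ⬝ᵥ (V⁻¹ *ᵥ x) := by
    intro x
    set u : Fin n → ℝ := fun k => (x k - (∑ l, x l)/(2*((n:ℝ)-1)))/(M*((n:ℝ)-2)) with hu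
    have hk := key_id hn M (ne_of_gt hM0) x u
    have hzz : (fun k => u k - (x k - (∑ l, x l)/(2*((n:ℝ)-1)))/(M*((n:ℝ)-2)))
        = (fun _ : Fin n => (0:ℝ)) := by
      funext k
      simp only [hu]
      exact sub_self _
    rw [hzz] at hk
    rw [show ((fun _ : Fin n => (0:ℝ)) ⬝ᵥ (fun _ : Fin n => (0:ℝ))) = 0 from by
      simp [dotProduct]] at hk
    rw [show (∑ _k : Fin n, (0:ℝ)) = 0 from by simp] at hk
    have hk' : 0 = M * (((n:ℝ)-2) * (u ⬝ᵥ u) + (∑ k, u k)^2) - 2*(x ⬝ᵥ u)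
        + ((x ⬝ᵥ x) - (∑ k, x k)^2/(2*((n:ℝ)-1)))/(M*((n:ℝ)-2)) := by
      linear_combination hk
    have huq := (hsand u).2
    set y := V⁻¹ *ᵥ x with hy
    have hVy : V *ᵥ y = x := hme1 x
    have hw := (hsand (u - y)).1
    have hwnn : 0 ≤ (u - y) ⬝ᵥ (V *ᵥ (u - y)) :=
      le_trans (mul_nonneg hm.le (add_nonneg (mul_nonneg hν2.le (hq_nonneg _)) (sq_nonneg _))) hw
    have hexp : (u - y) ⬝ᵥ (V *ᵥ (u - y)) = u ⬝ᵥ (V *ᵥ u) - 2*(x ⬝ᵥ u) + x ⬝ᵥ y := by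
      rw [Matrix.mulVec_sub, dotProduct_sub, sub_dotProduct,
        sub_dotProduct, hVy]
      have h1 : y ⬝ᵥ (V *ᵥ u) = x ⬝ᵥ u := by rw [hswap, hVy]
      have h2 : y ⬝ᵥ x = x ⬝ᵥ y := dotProduct_comm _ _
      have h3 : u ⬝ᵥ x = x ⬝ᵥ u := dotProduct_comm _ _
      rw [h1, h2, h3]; ring
    rw [hexp] at hwnn
    linarith [hk', huq, hwnn]
  -- the comparison vectors
  set vec : Fin n → Fin n → ℝ := fun i0 k => if k = i0 then 0 else V k i0 / V i0 i0 with hvec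
  have hvec_sum : ∀ i0 : Fin n, ∑ k, vec i0 k = 1 := by
    intro i0
    simp only [hvec]
    rw [sum_ite_ne i0 (fun k => V k i0 / V i0 i0)]
    have h1 : ∑ k ∈ Finset.univ.erase i0, V k i0 / V i0 i0
        = (∑ k ∈ Finset.univ.erase i0, V i0 k) / V i0 i0 := by
      rw [Finset.sum_div]
      exact Finset.sum_congr rfl fun k _ => by rw [hGsym]
    rw [h1, ← hbal i0, div_self (hd_pos i0).ne']
  have hvec_nonneg : ∀ i0 k, 0 ≤ vec i0 k := by
    intro i0 k
    simp only [hvec]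
    by_cases hk : k = i0
    · simp [hk]
    · simp only [if_neg hk]
      exact div_nonneg (le_trans hm.le (hlb k i0 hk)) (hd_pos i0).le
  have hvec_mul_ub : ∀ i0 k, V i0 i0 * vec i0 k ≤ M := by
    intro i0 k
    simp only [hvec]
    by_cases hk : k = i0
    · simp [hk, hM0.le]
    · simp only [if_neg hk]
      rw [mul_comm, div_mul_cancel₀ _ (hd_pos i0).ne']
      exact hub k i0 hk
  have hdot_nonneg : ∀ i0 j0, 0 ≤ (vec i0) ⬝ᵥ (vec j0) := fun i0 j0 =>
    Finset.sum_nonneg fun k _ => mul_nonneg (hvec_nonneg i0 k) (hvec_nonneg j0 k)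
  have hdot_cert : ∀ i0 j0, ((n:ℝ)-1)*m*((vec i0) ⬝ᵥ (vec j0)) ≤ M := by
    intro i0 j0
    have h1 : V i0 i0 * ((vec i0) ⬝ᵥ (vec j0)) ≤ M := by
      have he : V i0 i0 * ((vec i0) ⬝ᵥ (vec j0)) = ∑ k, (V i0 i0 * vec i0 k) * vec j0 k := by
        simp only [dotProduct, Finset.mul_sum]
        exact Finset.sum_congr rfl fun k _ => by ring
      rw [he]
      calc ∑ k, (V i0 i0 * vec i0 k) * vec j0 k ≤ ∑ k, M * vec j0 k :=
            Finset.sum_le_sum fun k _ =>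
              mul_le_mul_of_nonneg_right (hvec_mul_ub i0 k) (hvec_nonneg j0 k)
        _ = M * ∑ k, vec j0 k := by rw [← Finset.mul_sum]
        _ = M := by rw [hvec_sum j0, mul_one]
    have h2 : ((n:ℝ)-1)*m*((vec i0) ⬝ᵥ (vec j0)) ≤ V i0 i0 * ((vec i0) ⬝ᵥ (vec j0)) :=
      mul_le_mul_of_nonneg_right (hd_lb i0) (hdot_nonneg i0 j0)
    linarith
  have hvecdef : ∀ i0 : Fin n,
      vec i0 = (V i0 i0)⁻¹ • (V *ᵥ Pi.single i0 1) - Pi.single i0 1 := by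
    intro i0
    funext k
    simp only [hvec, Pi.sub_apply, Pi.smul_apply, smul_eq_mul, Matrix.mulVec_single_one, Matrix.col_apply, mul_one]
    by_cases hk : k = i0
    · subst hk
      rw [if_pos rfl, Pi.single_eq_same, inv_mul_cancel₀ (hd_pos k).ne', sub_self]
    · rw [if_neg hk, Pi.single_eq_of_ne hk, sub_zero, div_eq_inv_mul]
  -- per-entry bounds
  intro i j
  have hbpu := hupper (vec i)
  rw [hvec_sum i, one_pow] at hbpu
  have hbru := hupper (vec j)
  rw [hvec_sum j, one_pow] at hbru
  -- difference vector
  have hsum0 : (∑ k, (vec i - vec j) k) = 0 := by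
    simp only [Pi.sub_apply, Finset.sum_sub_distrib, hvec_sum i, hvec_sum j, sub_self]
  have hdsub : (vec i - vec j) ⬝ᵥ (vec i - vec j)
      = (vec i ⬝ᵥ vec i) - 2*(vec i ⬝ᵥ vec j) + (vec j ⬝ᵥ vec j) := by
    simp only [sub_dotProduct, dotProduct_sub]
    rw [show vec j ⬝ᵥ vec i = vec i ⬝ᵥ vec j from dotProduct_comm _ _]
    ring
  have hdinv : (vec i - vec j) ⬝ᵥ (V⁻¹ *ᵥ (vec i - vec j))
      = (vec i ⬝ᵥ (V⁻¹ *ᵥ vec i)) - 2*(vec i ⬝ᵥ (V⁻¹ *ᵥ vec j))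
        + (vec j ⬝ᵥ (V⁻¹ *ᵥ vec j)) := by
    rw [Matrix.mulVec_sub]
    simp only [sub_dotProduct, dotProduct_sub]
    rw [show vec j ⬝ᵥ (V⁻¹ *ᵥ vec i) = vec i ⬝ᵥ (V⁻¹ *ᵥ vec j) from by
      rw [hswapInv, dotProduct_comm]]
    ring
  have hsub := hlower (vec i - vec j)
  rw [hsum0, hdsub, hdinv] at hsub
  rw [show ((0:ℝ))^2/(2*((n:ℝ)-1)) = 0 from by norm_num, sub_zero] at hsub
  -- sum vector
  have hsum2 : (∑ k, (vec i + vec j) k) = 2 := by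
    simp only [Pi.add_apply, Finset.sum_add_distrib, hvec_sum i, hvec_sum j]
    norm_num
  have hdadd : (vec i + vec j) ⬝ᵥ (vec i + vec j)
      = (vec i ⬝ᵥ vec i) + 2*(vec i ⬝ᵥ vec j) + (vec j ⬝ᵥ vec j) := by
    simp only [add_dotProduct, dotProduct_add]
    rw [show vec j ⬝ᵥ vec i = vec i ⬝ᵥ vec j from dotProduct_comm _ _]
    ring
  have hdinv2 : (vec i + vec j) ⬝ᵥ (V⁻¹ *ᵥ (vec i + vec j))
      = (vec i ⬝ᵥ (V⁻¹ *ᵥ vec i)) + 2*(vec i ⬝ᵥ (V⁻¹ *ᵥ vec j))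
        + (vec j ⬝ᵥ (V⁻¹ *ᵥ vec j)) := by
    rw [Matrix.mulVec_add]
    simp only [add_dotProduct, dotProduct_add]
    rw [show vec j ⬝ᵥ (V⁻¹ *ᵥ vec i) = vec i ⬝ᵥ (V⁻¹ *ᵥ vec j) from by
      rw [hswapInv, dotProduct_comm]]
    ring
  have hadd := hlower (vec i + vec j)
  rw [hsum2, hdadd, hdinv2] at hadd
  rw [show ((2:ℝ))^2 = 4 from by norm_num] at hadd
  -- scalar steps
  have hstepU := stepU ((n:ℝ)) m M (vec i ⬝ᵥ vec i) (vec j ⬝ᵥ vec j) (vec i ⬝ᵥ vec j)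
    hn3 hm hmM (hdot_cert i i) (hdot_cert j j) (hdot_cert i j)
  have hstepL := stepL ((n:ℝ)) m M (vec i ⬝ᵥ vec i) (vec j ⬝ᵥ vec j) (vec i ⬝ᵥ vec j)
    hn3 hm hmM (hdot_cert i i) (hdot_cert j j) (hdot_nonneg i j)
  have hbridge : (2*M - m)/(((n:ℝ)-1)*(((n:ℝ))-2)*m^2)
      = 2*((2*M - m)/(2*((n:ℝ)-1)*(((n:ℝ))-2)*m^2)) := by
    field_simp
  rw [hbridge] at hstepU hstepL
  have hP2u : vec i ⬝ᵥ (V⁻¹ *ᵥ vec j) ≤ (2*M - m)/(2*((n:ℝ)-1)*(((n:ℝ))-2)*m^2) := by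
    linarith [hbpu, hbru, hsub, hstepU]
  have hP2l : -(vec i ⬝ᵥ (V⁻¹ *ᵥ vec j)) ≤ (2*M - m)/(2*((n:ℝ)-1)*(((n:ℝ))-2)*m^2) := by
    linarith [hbpu, hbru, hadd, hstepL]
  have hfin := finalT ((n:ℝ)) m M hn3 hm hmM
  have hMterm : (0:ℝ) ≤ M/((((n:ℝ)-1)*m)*(((n:ℝ)-1)*m)) := by positivity
  -- entry identity
  have hP2raw : vec i ⬝ᵥ (V⁻¹ *ᵥ vec j) = V j i * ((V i i)⁻¹ * (V j j)⁻¹)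
      - (V i i)⁻¹ * (Pi.single i (1:ℝ) ⬝ᵥ Pi.single j (1:ℝ))
      - (V j j)⁻¹ * (Pi.single i (1:ℝ) ⬝ᵥ Pi.single j (1:ℝ))
      + V⁻¹ i j := by
    rw [hvecdef i, hvecdef j, Matrix.mulVec_sub, Matrix.mulVec_smul, hme2]
    simp only [sub_dotProduct, dotProduct_sub, smul_dotProduct,
      dotProduct_smul, smul_eq_mul]
    have t1 : (V *ᵥ Pi.single i 1) ⬝ᵥ Pi.single j (1:ℝ) = V j i := by
      simp [dotProduct_single, Matrix.mulVec_single]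
    have t2 : (V *ᵥ Pi.single i 1) ⬝ᵥ (V⁻¹ *ᵥ Pi.single j (1:ℝ))
        = Pi.single i (1:ℝ) ⬝ᵥ Pi.single j (1:ℝ) := by
      rw [← hswap, hme1]
    have t3 : Pi.single i (1:ℝ) ⬝ᵥ (V⁻¹ *ᵥ Pi.single j 1) = V⁻¹ i j := by
      simp [single_dotProduct, Matrix.mulVec_single]
    rw [t1, t2, t3]
    ring
  have hsing : (Pi.single i (1:ℝ) ⬝ᵥ Pi.single j (1:ℝ)) = if i = j then (1:ℝ) else 0 := by
    rw [single_dotProduct]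
    simp [Pi.single_apply]
  by_cases hij : i = j
  · subst hij
    have hentry : (V⁻¹ - Matrix.diagonal (fun i => (V i i)⁻¹)) i i
        = V⁻¹ i i - (V i i)⁻¹ := by
      simp [Matrix.sub_apply, Matrix.diagonal_apply_eq]
    have hvii : V i i * ((V i i)⁻¹ * (V i i)⁻¹) = (V i i)⁻¹ := by
      field_simp
    have hPP : V⁻¹ i i - (V i i)⁻¹ = vec i ⬝ᵥ (V⁻¹ *ᵥ vec i) := by
      rw [hP2raw, hsing, if_pos rfl]
      linear_combination -hvii
    rw [hentry, hPP, abs_le]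
    constructor
    · linarith [hP2l, hfin, hMterm]
    · linarith [hP2u, hfin, hMterm]
  · have hentry : (V⁻¹ - Matrix.diagonal (fun i => (V i i)⁻¹)) i j = V⁻¹ i j := by
      simp [Matrix.sub_apply, Matrix.diagonal_apply_ne _ hij]
    have hPP : V⁻¹ i j = (vec i ⬝ᵥ (V⁻¹ *ᵥ vec j)) - V j i * ((V i i)⁻¹ * (V j j)⁻¹) := by
      rw [hP2raw, hsing, if_neg hij]
      ring
    have hT0 : 0 ≤ V j i * ((V i i)⁻¹ * (V j j)⁻¹) := by
      have hji : (0:ℝ) ≤ V j i := le_trans hm.le (hlb j i (fun h => hij h.symm))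
      exact mul_nonneg hji (mul_nonneg (inv_nonneg.mpr (hd_pos i).le)
        (inv_nonneg.mpr (hd_pos j).le))
    have hTub : V j i * ((V i i)⁻¹ * (V j j)⁻¹) ≤ M/((((n:ℝ)-1)*m)*(((n:ℝ)-1)*m)) := by
      have e1 : (V i i)⁻¹ ≤ (((n:ℝ)-1)*m)⁻¹ :=
        inv_anti₀ (by positivity) (hd_lb i)
      have e2 : (V j j)⁻¹ ≤ (((n:ℝ)-1)*m)⁻¹ :=
        inv_anti₀ (by positivity) (hd_lb j)
      calc V j i * ((V i i)⁻¹ * (V j j)⁻¹)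
          ≤ M * ((V i i)⁻¹ * (V j j)⁻¹) := by
            apply mul_le_mul_of_nonneg_right (hub j i (fun h => hij h.symm))
            exact mul_nonneg (inv_nonneg.mpr (hd_pos i).le) (inv_nonneg.mpr (hd_pos j).le)
        _ ≤ M * ((((n:ℝ)-1)*m)⁻¹ * (((n:ℝ)-1)*m)⁻¹) := by
            apply mul_le_mul_of_nonneg_left _ hM0.le
            apply mul_le_mul e1 e2 (inv_nonneg.mpr (hd_pos j).le) (by positivity)
        _ = M/((((n:ℝ)-1)*m)*(((n:ℝ)-1)*m)) := by
            have hmi : (((((n:ℝ)-1)*m))*((((n:ℝ)-1)*m)))⁻¹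
                = ((((n:ℝ)-1)*m))⁻¹ * ((((n:ℝ)-1)*m))⁻¹ := by rw [mul_inv]
            rw [div_eq_mul_inv, hmi]
    rw [hentry, hPP, abs_le]
    constructor
    · linarith [hP2l, hfin, hTub]
    · linarith [hP2u, hfin, hT0, hMterm]

end
end
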